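/- Let Ω be a measure space, 1 < γ ≤ 2, and let ρ̄, ρ : Ω → (0,∞) be measurable with ∫ρ̄ = ∫ρ = 1. Then there exists a constant C > 0 depending only on γ such that the L^{2/(3-γ)} norm of ρ̄ - ρ squared is bounded by C times ∫ H(ρ̄|ρ), where H(ρ̄|ρ) = (1/(γ-1))(ρ̄^γ - ρ^γ + γ(ρ-ρ̄)ρ^{γ-1}). -/

import Mathlib

open MeasureTheory Real
open intervalIntegral
open scoped ENNReal NNReal

lemma aux_tangent {r u v w : ℝ} (hr0 : 0 < r) (hr1 : r ≤ 1) (hu : 0 < u)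
    (huv : u ≤ v) (hvw : v ≤ w) : r * w ^ (r - 1) * (v - u) ≤ v ^ r - u ^ r := by
  rcases eq_or_lt_of_le huv with h | h
  · simp [h]
  obtain ⟨c, hc, hc'⟩ := exists_hasDerivAt_eq_slope (fun x => x ^ r)
    (fun x => r * x ^ (r - 1)) h
    (by
      apply ContinuousOn.rpow_const continuousOn_id
      intro x hx
      exact Or.inl (by simpa using (lt_of_lt_of_le hu hx.1).ne'))
    (fun x hx => Real.hasDerivAt_rpow_const (Or.inl (lt_of_lt_of_le hu hx.1.le).ne'))
  have hc0 : 0 < c := hu.trans hc.1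
  have hcw : c ≤ w := (hc.2.le.trans hvw)
  rw [eq_div_iff (by linarith : v - u ≠ 0)] at hc'
  have h1 : w ^ (r - 1) ≤ c ^ (r - 1) :=
    Real.rpow_le_rpow_of_nonpos hc0 hcw (by linarith)
  calc r * w ^ (r - 1) * (v - u) ≤ r * c ^ (r - 1) * (v - u) := by
        apply mul_le_mul_of_nonneg_right (mul_le_mul_of_nonneg_left h1 hr0.le) (by linarith)
    _ = v ^ r - u ^ r := by linarith

lemma aux_pointwise (γ : ℝ) (hγ1 : 1 < γ) (hγ2 : γ ≤ 2) {a b : ℝ} (ha : 0 < a) (hb : 0 < b) :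
    γ / 2 * max a b ^ (γ - 2) * (a - b) ^ 2 ≤
      (1/(γ-1)) * (a ^ γ - b ^ γ + γ * (b - a) * b ^ (γ - 1)) := by
  have hγ0 : 0 < γ := by linarith
  have hγ1' : 0 < γ - 1 := by linarith
  suffices h : γ * (γ-1) / 2 * max a b ^ (γ - 2) * (a - b) ^ 2 ≤
      a ^ γ - b ^ γ + γ * (b - a) * b ^ (γ - 1) by
    have h2 : γ / 2 * max a b ^ (γ - 2) * (a - b) ^ 2 =
        (1/(γ-1)) * (γ * (γ-1) / 2 * max a b ^ (γ - 2) * (a - b) ^ 2) := by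
      field_simp
    rw [h2]
    exact mul_le_mul_of_nonneg_left h (by positivity)
  have int1 : IntervalIntegrable (fun t : ℝ => t ^ (γ - 1)) volume b a :=
    intervalIntegral.intervalIntegrable_rpow' (by linarith)
  have hint : (∫ t in b..a, t ^ (γ - 1)) = (a ^ γ - b ^ γ) / γ := by
    rw [integral_rpow (Or.inl (by linarith))]
    rw [show γ - 1 + 1 = γ by ring]
  have hK : a ^ γ - b ^ γ + γ * (b - a) * b ^ (γ - 1) =
      γ * ∫ t in b..a, (t ^ (γ - 1) - b ^ (γ - 1)) := by
    rw [intervalIntegral.integral_sub int1 intervalIntegrable_const, hint,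
      intervalIntegral.integral_const, smul_eq_mul]
    field_simp
    ring
  rw [hK]
  rcases le_total b a with hba | hab
  · rw [max_eq_left hba]
    have mono : (∫ t in b..a, (γ-1) * a ^ (γ-2) * (t - b)) ≤
        ∫ t in b..a, (t ^ (γ - 1) - b ^ (γ - 1)) := by
      apply intervalIntegral.integral_mono_on hba
        ((continuous_const.mul (continuous_id.sub continuous_const)).intervalIntegrable _ _)
        (int1.sub intervalIntegrable_const)
      intro t ht
      have := aux_tangent (r := γ-1) (u := b) (v := t) (w := a) hγ1' (by linarith) hb ht.1 ht.2
      rw [show γ - 1 - 1 = γ - 2 by ring] at this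
      simp only [Pi.mul_apply, Pi.sub_apply, id_eq]
      linarith
    have hlow : (∫ t in b..a, (γ-1) * a ^ (γ-2) * (t - b)) =
        (γ-1) * a ^ (γ-2) * ((a-b)^2/2) := by
      rw [intervalIntegral.integral_const_mul,
        intervalIntegral.integral_sub intervalIntegrable_id intervalIntegrable_const,
        integral_id, intervalIntegral.integral_const, smul_eq_mul]
      ring
    rw [hlow] at mono
    calc γ * (γ-1) / 2 * a ^ (γ-2) * (a - b) ^ 2
        = γ * ((γ-1) * a ^ (γ-2) * ((a-b)^2/2)) := by ring
      _ ≤ γ * ∫ t in b..a, (t ^ (γ - 1) - b ^ (γ - 1)) :=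
          mul_le_mul_of_nonneg_left mono hγ0.le
  · rw [max_eq_right hab]
    have hsym : (∫ t in b..a, (t ^ (γ - 1) - b ^ (γ - 1))) =
        ∫ t in a..b, (b ^ (γ - 1) - t ^ (γ - 1)) := by
      rw [intervalIntegral.integral_symm]
      rw [← intervalIntegral.integral_neg]
      congr 1; ext t; ring
    rw [hsym]
    have mono : (∫ t in a..b, (γ-1) * b ^ (γ-2) * (b - t)) ≤
        ∫ t in a..b, (b ^ (γ - 1) - t ^ (γ - 1)) := by
      apply intervalIntegral.integral_mono_on hab
        ((continuous_const.mul (continuous_const.sub continuous_id)).intervalIntegrable _ _)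
        ((intervalIntegrable_const).sub (int1.symm))
      intro t ht
      have := aux_tangent (r := γ-1) (u := t) (v := b) (w := b) hγ1' (by linarith)
        (lt_of_lt_of_le ha ht.1) ht.2 le_rfl
      rw [show γ - 1 - 1 = γ - 2 by ring] at this
      simp only [Pi.mul_apply, Pi.sub_apply, id_eq]
      linarith
    have hlow : (∫ t in a..b, (γ-1) * b ^ (γ-2) * (b - t)) =
        (γ-1) * b ^ (γ-2) * ((b-a)^2/2) := by
      rw [intervalIntegral.integral_const_mul,
        intervalIntegral.integral_sub intervalIntegrable_const intervalIntegrable_id,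
        integral_id, intervalIntegral.integral_const, smul_eq_mul]
      ring
    rw [hlow] at mono
    calc γ * (γ-1) / 2 * b ^ (γ-2) * (a - b) ^ 2
        = γ * ((γ-1) * b ^ (γ-2) * ((b-a)^2/2)) := by ring
      _ ≤ γ * ∫ t in a..b, (b ^ (γ - 1) - t ^ (γ - 1)) :=
          mul_le_mul_of_nonneg_left mono hγ0.le

lemma aux_split {γ : ℝ} (hγ1 : 1 < γ) (hγ2 : γ ≤ 2) {M fx : ℝ} (hM : 0 < M) (hf : 0 ≤ fx) :
    fx ^ (2/(3-γ)) = (M ^ (γ-2) * fx ^ (2:ℝ)) ^ (1/(3-γ)) * M ^ ((2-γ)/(3-γ)) := by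
  have h3 : (0:ℝ) < 3 - γ := by linarith
  rw [Real.mul_rpow (Real.rpow_nonneg hM.le _) (Real.rpow_nonneg hf _),
    ← Real.rpow_mul hM.le, ← Real.rpow_mul hf,
    show (γ-2) * (1/(3-γ)) = (γ-2)/(3-γ) by ring,
    show (2:ℝ) * (1/(3-γ)) = 2/(3-γ) by ring,
    mul_right_comm, ← Real.rpow_add hM,
    show (γ-2)/(3-γ) + (2-γ)/(3-γ) = 0 by field_simp; ring,
    Real.rpow_zero, one_mul]

/-- For `1 < γ ≤ 2` there is a constant `C > 0` depending only on `γ` such that for any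
measure space `Ω` and positive measurable densities `ρ̄, ρ` of total mass one,
`‖ρ̄ - ρ‖_{L^{2/(3-γ)}}² ≤ C ∫ H(ρ̄|ρ)`, where
`H(ρ̄|ρ) = (1/(γ-1))(ρ̄^γ - ρ^γ + γ(ρ - ρ̄)ρ^(γ-1))`. -/
theorem lpNorm_sq_le_relative_entropy (γ : ℝ) (hγ1 : 1 < γ) (hγ2 : γ ≤ 2) :
    ∃ C > 0, ∀ (Ω : Type) (_ : MeasurableSpace Ω) (μ : Measure Ω) (ρb ρ : Ω → ℝ),
      Measurable ρb → Measurable ρ → (∀ x, 0 < ρb x) → (∀ x, 0 < ρ x) →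
      Integrable ρb μ → Integrable ρ μ →
      (∫ x, ρb x ∂μ) = 1 → (∫ x, ρ x ∂μ) = 1 →
      (eLpNorm (fun x => ρb x - ρ x) (ENNReal.ofReal (2/(3-γ))) μ) ^ (2:ℕ) ≤
        ENNReal.ofReal C *
          ∫⁻ x, ENNReal.ofReal
            ((1/(γ-1)) * (ρb x ^ γ - ρ x ^ γ + γ*(ρ x - ρb x)*ρ x ^ (γ-1))) ∂μ := by
  have h3 : (0:ℝ) < 3 - γ := by linarith
  set pr : ℝ := 2 / (3 - γ) with hpr_def
  have hpr : 0 < pr := by positivity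
  refine ⟨2 ^ (2-γ) / (γ/2), by positivity, ?_⟩
  intro Ω _ μ ρb ρ hmb hm hpb hp hib hi hIb hI
  set f : Ω → ℝ := fun x => ρb x - ρ x with hf_def
  set M : Ω → ℝ := fun x => max (ρb x) (ρ x) with hM_def
  have hMpos : ∀ x, 0 < M x := fun x => lt_max_of_lt_left (hpb x)
  set g : Ω → ℝ := fun x => M x ^ (γ-2) * |f x| ^ (2:ℝ) with hg_def
  have hg0 : ∀ x, 0 ≤ g x := fun x => by
    have := (hMpos x).le; positivity
  set A : ℝ≥0∞ := ∫⁻ x, ENNReal.ofReal (g x) ∂μ with hA_def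
  set B : ℝ≥0∞ := ∫⁻ x, ENNReal.ofReal (M x) ∂μ with hB_def
  set I : ℝ≥0∞ := ∫⁻ x, ENNReal.ofReal
      ((1/(γ-1)) * (ρb x ^ γ - ρ x ^ γ + γ*(ρ x - ρb x)*ρ x ^ (γ-1))) ∂μ with hI_def
  have hMmeas : Measurable M := hmb.max hm
  have hfmeas : Measurable f := hmb.sub hm
  have hgmeas : Measurable g :=
    (hMmeas.pow_const (γ-2)).mul (hfmeas.abs.pow_const (2:ℝ))
  -- entropy bound: ofReal (γ/2) * A ≤ I
  have hAI : ENNReal.ofReal (γ/2) * A ≤ I := by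
    rw [hA_def, ← lintegral_const_mul _ hgmeas.ennreal_ofReal]
    apply lintegral_mono
    intro x
    dsimp only
    rw [← ENNReal.ofReal_mul (by positivity : (0:ℝ) ≤ γ/2)]
    apply ENNReal.ofReal_le_ofReal
    have h1 : |f x| ^ (2:ℝ) = (ρb x - ρ x) ^ 2 := by
      rw [show (2:ℝ) = ((2:ℕ):ℝ) by norm_num, Real.rpow_natCast, sq_abs]
    calc γ/2 * g x = γ/2 * M x ^ (γ-2) * (ρb x - ρ x)^2 := by rw [hg_def]; dsimp only; rw [h1]; ring
      _ ≤ _ := aux_pointwise γ hγ1 hγ2 (hpb x) (hp x)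
  -- mass bound : B ≤ ofReal 2
  have hB2 : B ≤ ENNReal.ofReal 2 := by
    calc B ≤ ∫⁻ x, ENNReal.ofReal (ρb x + ρ x) ∂μ := by
          apply lintegral_mono
          intro x
          exact ENNReal.ofReal_le_ofReal (max_le_add_of_nonneg (hpb x).le (hp x).le)
      _ = ENNReal.ofReal (∫ x, (ρb x + ρ x) ∂μ) :=
          (ofReal_integral_eq_lintegral_ofReal (hib.add hi)
            (Filter.Eventually.of_forall fun x => add_nonneg (hpb x).le (hp x).le)).symm
      _ = ENNReal.ofReal 2 := by rw [integral_add hib hi, hIb, hI]; norm_num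
  -- Hölder step
  set X : ℝ≥0∞ := ∫⁻ x, (‖f x‖₊ : ℝ≥0∞) ^ pr ∂μ with hX_def
  have hXpt : ∀ x, (‖f x‖₊ : ℝ≥0∞) ^ pr =
      (ENNReal.ofReal (g x)) ^ (1/(3-γ)) * (ENNReal.ofReal (M x)) ^ ((2-γ)/(3-γ)) := by
    intro x
    rw [← enorm_eq_nnnorm, Real.enorm_eq_ofReal_abs,
      ENNReal.ofReal_rpow_of_nonneg (abs_nonneg _) hpr.le,
      ENNReal.ofReal_rpow_of_nonneg (hg0 x) (one_div_nonneg.mpr h3.le),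
      ENNReal.ofReal_rpow_of_nonneg (hMpos x).le (div_nonneg (by linarith) h3.le),
      ← ENNReal.ofReal_mul (Real.rpow_nonneg (hg0 x) _)]
    congr 1
    exact aux_split hγ1 hγ2 (hMpos x) (abs_nonneg _)
  have hHolder : X ≤ A ^ (pr/2) * B ^ ((2-γ)/(3-γ)) := by
    rcases lt_or_eq_of_le hγ2 with hγlt | hγeq
    · have hq : Real.HolderConjugate (3-γ) ((3-γ)/(2-γ)) := by
        exact (Real.holderConjugate_iff_eq_conjExponent (by linarith)).mpr (by ring)
      have hG : AEMeasurable (fun x => (ENNReal.ofReal (g x)) ^ (1/(3-γ))) μ :=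
        (hgmeas.ennreal_ofReal.pow_const _).aemeasurable
      have hH : AEMeasurable (fun x => (ENNReal.ofReal (M x)) ^ ((2-γ)/(3-γ))) μ :=
        (hMmeas.ennreal_ofReal.pow_const _).aemeasurable
      have hold := ENNReal.lintegral_mul_le_Lp_mul_Lq μ hq hG hH
      have e1 : ∀ x, ((ENNReal.ofReal (g x)) ^ (1/(3-γ))) ^ (3-γ) = ENNReal.ofReal (g x) := by
        intro x
        rw [← ENNReal.rpow_mul, one_div, inv_mul_cancel₀ (by linarith : (3:ℝ)-γ ≠ 0),
          ENNReal.rpow_one]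
      have e2 : ∀ x, ((ENNReal.ofReal (M x)) ^ ((2-γ)/(3-γ))) ^ ((3-γ)/(2-γ)) =
          ENNReal.ofReal (M x) := by
        intro x
        rw [← ENNReal.rpow_mul, div_mul_div_comm,
          show (2-γ)*(3-γ) = (3-γ)*(2-γ) by ring,
          div_self (by nlinarith : ((3:ℝ)-γ)*(2-γ) ≠ 0), ENNReal.rpow_one]
      calc X = ∫⁻ x, ((fun x => (ENNReal.ofReal (g x)) ^ (1/(3-γ))) *
            (fun x => (ENNReal.ofReal (M x)) ^ ((2-γ)/(3-γ)))) x ∂μ := by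
            rw [hX_def]; congr 1; ext x; rw [hXpt x]; rfl
        _ ≤ (∫⁻ x, ((ENNReal.ofReal (g x)) ^ (1/(3-γ))) ^ (3-γ) ∂μ) ^ (1/(3-γ)) *
            (∫⁻ x, ((ENNReal.ofReal (M x)) ^ ((2-γ)/(3-γ))) ^ ((3-γ)/(2-γ)) ∂μ) ^
              (1/((3-γ)/(2-γ))) := hold
        _ = A ^ (pr/2) * B ^ ((2-γ)/(3-γ)) := by
            simp_rw [e1, e2]
            rw [one_div ((3-γ)/(2-γ)), inv_div]
            congr 2
            rw [hpr_def]
            ring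
    · -- γ = 2
      rw [show (2-γ)/(3-γ) = 0 by rw [hγeq]; norm_num, ENNReal.rpow_zero, mul_one,
        show pr/2 = 1 by rw [hpr_def, hγeq]; norm_num, ENNReal.rpow_one]
      apply le_of_eq
      rw [hX_def, hA_def]
      apply lintegral_congr
      intro x
      rw [hXpt x, show (2-γ)/(3-γ) = 0 by rw [hγeq]; norm_num, ENNReal.rpow_zero, mul_one,
        show 1/(3-γ) = 1 by rw [hγeq]; norm_num, ENNReal.rpow_one]
  -- assemble
  have hP0 : (ENNReal.ofReal pr) ≠ 0 := by
    simp only [ne_eq, ENNReal.ofReal_eq_zero, not_le]; exact hpr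
  rw [eLpNorm_eq_lintegral_rpow_enorm_toReal hP0 ENNReal.ofReal_ne_top,
    ENNReal.toReal_ofReal hpr.le]
  change (X ^ (1/pr)) ^ (2:ℕ) ≤ _
  have hstep : ((X ^ (1/pr)) : ℝ≥0∞) ^ (2:ℕ) = X ^ (2/pr) := by
    rw [← ENNReal.rpow_natCast (X ^ (1/pr)) 2, ← ENNReal.rpow_mul]
    congr 1
    push_cast
    ring
  rw [hstep]
  calc X ^ (2/pr) ≤ (A ^ (pr/2) * B ^ ((2-γ)/(3-γ))) ^ (2/pr) :=
        ENNReal.rpow_le_rpow hHolder (by positivity)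
    _ = A * B ^ (2-γ) := by
        rw [ENNReal.mul_rpow_of_nonneg _ _ (by positivity : (0:ℝ) ≤ 2/pr),
          ← ENNReal.rpow_mul, ← ENNReal.rpow_mul,
          show pr/2 * (2/pr) = 1 by field_simp,
          show (2-γ)/(3-γ) * (2/pr) = 2-γ by rw [hpr_def]; field_simp,
          ENNReal.rpow_one]
    _ ≤ (I / ENNReal.ofReal (γ/2)) * (ENNReal.ofReal 2) ^ (2-γ) := by
        apply mul_le_mul'
        · rw [ENNReal.le_div_iff_mul_le (Or.inl (by simp; positivity)) (Or.inl ENNReal.ofReal_ne_top),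
            mul_comm]
          exact hAI
        · exact ENNReal.rpow_le_rpow hB2 (by linarith)
    _ = ENNReal.ofReal (2 ^ (2-γ) / (γ/2)) * I := by
        rw [ENNReal.ofReal_rpow_of_pos (by norm_num : (0:ℝ) < 2),
          ENNReal.ofReal_div_of_pos (by positivity : (0:ℝ) < γ/2),
          div_eq_mul_inv, div_eq_mul_inv]
        simp only [div_eq_mul_inv]
        ring
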